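/- The Narayana numbers N_{ℓ,s} := (1/ℓ)·C(ℓ,s)·C(ℓ,s-1) satisfy ∑_{s=1}^{ℓ} N_{ℓ,s} c^s = lim_{N→∞} A_ℓ(N, cN)/N^{ℓ+1}; concretely, the leading coefficient (in total degree ℓ+1) of the polynomial A_ℓ(N, M) := (1/ℓ) ∑_{j=0}^{ℓ-1} (-1)^j (N-j)_ℓ (M-j)_ℓ / (j!(ℓ-1-j)!) after substituting M = cN is ∑_{s=1}^{ℓ} N_{ℓ,s} c^s, i.e., the coefficient of N^{ℓ+1} in A_ℓ(N,cN) (viewed as a polynomial in N with coefficients in ℚ[c]) equals ∑_{s=1}^{ℓ} (1/ℓ) C(ℓ,s) C(ℓ,s-1) c^s. -/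

import Mathlib

open Finset Polynomial

theorem comp_CX_coeff {R : Type*} [CommRing R] (p : R[X]) (c : R) (n : ℕ) :
    (p.comp (C c * X)).coeff n = c ^ n * p.coeff n := by
  induction p using Polynomial.induction_on' with
  | add p q hp hq => simp [add_comp, hp, hq, mul_add]
  | monomial k a =>
      rw [monomial_comp, mul_pow, ← C_pow, ← mul_assoc, mul_comm (C a) (C (c^k)), mul_assoc,
        C_mul_X_pow_eq_monomial, coeff_C_mul, coeff_monomial]
      rcases eq_or_ne k n with rfl | h
      · simp
      · simp [h]

theorem comp_X_add_one_coeff {R : Type*} [CommRing R] (p : R[X]) (n : ℕ)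
    (h : p.natDegree ≤ n + 1) :
    (p.comp (X + 1)).coeff n = p.coeff n + (n + 1) * p.coeff (n + 1) := by
  have hrep : p.comp (X + 1) = ∑ k ∈ range (n + 2), C (p.coeff k) * (X + 1) ^ k := by
    conv_lhs => rw [p.as_sum_range' (n + 2) (lt_of_le_of_lt h (by omega))]
    simp [eval₂_finset_sum, Polynomial.comp]
  rw [hrep, finset_sum_coeff]
  have : ∀ k ∈ range (n + 2), (C (p.coeff k) * (X + 1) ^ k).coeff n
      = p.coeff k * (k.choose n : R) := by
    intro k _
    rw [coeff_C_mul, coeff_X_add_one_pow]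
  rw [sum_congr rfl this, sum_range_succ, sum_range_succ]
  have h0 : ∀ k ∈ range n, p.coeff k * (k.choose n : R) = 0 := by
    intro k hk
    rw [Nat.choose_eq_zero_of_lt (mem_range.mp hk)]
    simp
  rw [sum_congr rfl h0, Finset.sum_const_zero]
  simp [Nat.choose_succ_self_right, mul_comm]


theorem alt_sum_eval (n : ℕ) (f : Polynomial ℚ) (hf : f.natDegree ≤ n) :
    ∑ j ∈ range (n + 1), (-1 : ℚ) ^ j * (n.choose j : ℚ) * f.eval (j : ℚ)
      = (-1) ^ n * (n.factorial : ℚ) * f.coeff n := by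
  induction n generalizing f with
  | zero => simp [coeff_zero_eq_eval_zero]
  | succ n ih =>
    set g : Polynomial ℚ := f - f.comp (X + 1) with hg
    have hcomp_deg : (f.comp (X + 1)).natDegree ≤ n + 1 := by
      calc (f.comp (X + 1)).natDegree ≤ f.natDegree * (X + 1 : Polynomial ℚ).natDegree :=
            natDegree_comp_le
        _ ≤ n + 1 := by
            have : (X + 1 : Polynomial ℚ).natDegree = 1 := by
              simpa using natDegree_X_add_C (1 : ℚ)
            rw [this, mul_one]; exact hf
    have hgcoeff : ∀ m, n < m → g.coeff m = 0 := by
      intro m hm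
      rcases eq_or_ne m (n + 1) with rfl | hne
      · have h2 : f.coeff (n + 1 + 1) = 0 := coeff_eq_zero_of_natDegree_lt (by omega)
        rw [hg, coeff_sub, comp_X_add_one_coeff f (n + 1) (by omega), h2]
        ring
      · have h1 : f.coeff m = 0 := coeff_eq_zero_of_natDegree_lt (by omega)
        have h2 : (f.comp (X + 1)).coeff m = 0 := coeff_eq_zero_of_natDegree_lt (by omega)
        rw [hg, coeff_sub, h1, h2, sub_zero]
    have hgdeg : g.natDegree ≤ n := natDegree_le_iff_coeff_eq_zero.mpr hgcoeff
    have hgn : g.coeff n = -((n : ℚ) + 1) * f.coeff (n + 1) := by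
      rw [hg, coeff_sub, comp_X_add_one_coeff f n (by omega)]
      push_cast; ring
    have hA : ∑ j ∈ range (n + 2), (-1 : ℚ) ^ j * (n.choose j : ℚ) * f.eval (j : ℚ)
        = ∑ j ∈ range (n + 1), (-1 : ℚ) ^ j * (n.choose j : ℚ) * f.eval (j : ℚ) := by
      rw [sum_range_succ, Nat.choose_succ_self]; simp
    have key : ∑ j ∈ range (n + 2), (-1 : ℚ) ^ j * ((n + 1).choose j : ℚ) * f.eval (j : ℚ)
        = ∑ j ∈ range (n + 1), (-1 : ℚ) ^ j * (n.choose j : ℚ) * g.eval (j : ℚ) := by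
      have hgev : ∀ j : ℕ, g.eval (j : ℚ) = f.eval (j : ℚ) - f.eval (((j + 1 : ℕ) : ℚ)) := by
        intro j; rw [hg, eval_sub, eval_comp]; push_cast; simp
      calc ∑ j ∈ range (n + 2), (-1 : ℚ) ^ j * ((n + 1).choose j : ℚ) * f.eval (j : ℚ)
          = (∑ x ∈ range (n + 1), (-1 : ℚ) ^ (x + 1) * ((n + 1).choose (x + 1) : ℚ)
              * f.eval (((x + 1 : ℕ) : ℚ)))
            + (-1 : ℚ) ^ 0 * ((n + 1).choose 0 : ℚ) * f.eval ((0 : ℕ) : ℚ) := by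
            exact sum_range_succ' _ _
        _ = (∑ x ∈ range (n + 1),
              (((-1 : ℚ) ^ (x + 1) * (n.choose (x + 1) : ℚ) * f.eval (((x + 1 : ℕ) : ℚ)))
               - ((-1 : ℚ) ^ x * (n.choose x : ℚ) * f.eval (((x + 1 : ℕ) : ℚ)))))
            + f.eval ((0 : ℕ) : ℚ) := by
            simp only [pow_zero, Nat.choose_zero_right, Nat.cast_one, one_mul]
            congr 1
            refine sum_congr rfl fun x _ => ?_
            rw [Nat.choose_succ_succ]
            push_cast; ring
        _ = ((∑ x ∈ range (n + 1), (-1 : ℚ) ^ (x + 1) * (n.choose (x + 1) : ℚ)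
                * f.eval (((x + 1 : ℕ) : ℚ))) + (-1 : ℚ) ^ 0 * (n.choose 0 : ℚ)
                * f.eval ((0 : ℕ) : ℚ))
            - ∑ x ∈ range (n + 1), (-1 : ℚ) ^ x * (n.choose x : ℚ)
                * f.eval (((x + 1 : ℕ) : ℚ)) := by
            rw [sum_sub_distrib]
            simp only [Nat.choose_zero_right, Nat.cast_one, pow_zero, one_mul]
            ring
        _ = (∑ j ∈ range (n + 2), (-1 : ℚ) ^ j * (n.choose j : ℚ) * f.eval (j : ℚ))
            - ∑ x ∈ range (n + 1), (-1 : ℚ) ^ x * (n.choose x : ℚ)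
                * f.eval (((x + 1 : ℕ) : ℚ)) := by
            rw [sum_range_succ' (fun j => (-1 : ℚ) ^ j * (n.choose j : ℚ) * f.eval (j : ℚ))]
        _ = ∑ j ∈ range (n + 1), (-1 : ℚ) ^ j * (n.choose j : ℚ) * g.eval (j : ℚ) := by
            rw [hA, ← sum_sub_distrib]
            refine sum_congr rfl fun j _ => ?_
            rw [hgev]; ring
    rw [key, ih g hgdeg, hgn, Nat.factorial_succ]
    push_cast; ring

noncomputable def HPoly (ℓ : ℕ) : Polynomial (Polynomial ℚ) :=
  ∏ i ∈ range ℓ, (X + C (C (i : ℚ) - X))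

theorem HPoly_natDegree_le (ℓ : ℕ) : (HPoly ℓ).natDegree ≤ ℓ := by
  refine le_trans (natDegree_prod_le _ _) ?_
  refine le_trans (Finset.sum_le_card_nsmul _ _ 1 fun i _ => le_of_eq (natDegree_X_add_C _)) ?_
  simp

theorem HPoly_coeff_eq_zero (ℓ a : ℕ) (h : ℓ < a) : (HPoly ℓ).coeff a = 0 :=
  coeff_eq_zero_of_natDegree_lt (lt_of_le_of_lt (HPoly_natDegree_le ℓ) h)

theorem prod_term (T : Finset ℕ) :
    ∏ i ∈ T, (C (i : ℚ) - X) = C ((-1 : ℚ) ^ T.card) * ∏ i ∈ T, (X - C (i : ℚ)) := by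
  rw [map_pow, ← prod_const (b := (C (-1) : Polynomial ℚ)), ← prod_mul_distrib]
  exact prod_congr rfl fun i _ => by simp only [map_neg, map_one]; ring

theorem prod_term_natDegree_le (T : Finset ℕ) :
    (∏ i ∈ T, (C (i : ℚ) - X)).natDegree ≤ T.card := by
  refine le_trans (natDegree_prod_le _ _) ?_
  refine le_trans (Finset.sum_le_card_nsmul _ _ 1 fun i _ =>
    le_trans (natDegree_sub_le _ _) (by simp [natDegree_C, natDegree_X])) ?_
  simp

theorem prod_term_coeff (T : Finset ℕ) :
    (∏ i ∈ T, (C (i : ℚ) - X)).coeff T.card = (-1 : ℚ) ^ T.card := by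
  have hm : (∏ i ∈ T, (X - C (i : ℚ))).Monic := monic_prod_of_monic _ _ fun i _ => monic_X_sub_C _
  have hd : (∏ i ∈ T, (X - C (i : ℚ))).natDegree = T.card := by
    calc (∏ i ∈ T, (X - C (i : ℚ))).natDegree
        = ∑ i ∈ T, (X - C (i : ℚ)).natDegree := natDegree_prod _ _ fun i _ => X_sub_C_ne_zero _
      _ = ∑ _i ∈ T, 1 := sum_congr rfl fun i _ => natDegree_X_sub_C _
      _ = T.card := by simp
  rw [prod_term, coeff_C_mul, ← hd, hm.coeff_natDegree, mul_one]

theorem HPoly_coeff_natDegree_le (ℓ a : ℕ) (ha : a ≤ ℓ) :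
    ((HPoly ℓ).coeff a).natDegree ≤ ℓ - a := by
  rw [HPoly, Finset.prod_X_add_C_coeff _ _ (by simpa using ha)]
  refine natDegree_sum_le_of_forall_le _ _ fun T hT => ?_
  have := (Finset.mem_powersetCard.mp hT).2
  simpa [this] using prod_term_natDegree_le T

theorem HPoly_coeff_top (ℓ a : ℕ) (ha : a ≤ ℓ) :
    ((HPoly ℓ).coeff a).coeff (ℓ - a) = (-1 : ℚ) ^ (ℓ - a) * (ℓ.choose a : ℚ) := by
  rw [HPoly, Finset.prod_X_add_C_coeff _ _ (by simpa using ha), finset_sum_coeff]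
  simp only [Finset.card_range]
  have : ∀ T ∈ (range ℓ).powersetCard (ℓ - a),
      (∏ i ∈ T, (C (i : ℚ) - X)).coeff (ℓ - a) = (-1 : ℚ) ^ (ℓ - a) := by
    intro T hT
    have hc := (Finset.mem_powersetCard.mp hT).2
    rw [← hc]; exact prod_term_coeff T
  rw [sum_congr rfl this, sum_const, Finset.card_powersetCard, Finset.card_range,
    Nat.choose_symm ha]
  simp [mul_comm]
theorem asc_eval_prod {S : Type*} [CommSemiring S] (n : ℕ) (x : S) :
    (ascPochhammer S n).eval x = ∏ i ∈ range n, (x + i) := by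
  induction n with
  | zero => simp
  | succ n ih => rw [ascPochhammer_succ_eval, prod_range_succ, ih]
noncomputable def phiH (j : ℚ) : Polynomial ℚ →+* Polynomial ℚ :=
  (Polynomial.C : ℚ →+* Polynomial ℚ).comp (Polynomial.evalRingHom j)

noncomputable def EPoly (ℓ : ℕ) (j : ℚ) : Polynomial (Polynomial ℚ) :=
  (HPoly ℓ).map (phiH j)

theorem EPoly_eq_prod (ℓ : ℕ) (j : ℚ) :
    EPoly ℓ j = ∏ i ∈ range ℓ, (X + C (C ((i : ℚ) - j))) := by
  rw [EPoly, HPoly, Polynomial.map_prod]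
  refine prod_congr rfl fun i _ => ?_
  rw [Polynomial.map_add, map_X, map_C]
  simp [phiH]

theorem EPoly_coeff (ℓ : ℕ) (j : ℚ) (a : ℕ) :
    (EPoly ℓ j).coeff a = C (((HPoly ℓ).coeff a).eval j) := by
  rw [EPoly, coeff_map]; simp [phiH]

theorem eval_asc_sub (ℓ j : ℕ) :
    (ascPochhammer (Polynomial (Polynomial ℚ)) ℓ).eval (X - C (C (j : ℚ))) = EPoly ℓ (j : ℚ) := by
  rw [asc_eval_prod, EPoly_eq_prod]
  refine prod_congr rfl fun i _ => ?_
  have h1 : ((i : ℕ) : Polynomial (Polynomial ℚ)) = C (C (i : ℚ)) := by simp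
  rw [h1, map_sub, map_sub]
  ring

theorem eval_asc_sub' (ℓ j : ℕ) :
    (ascPochhammer (Polynomial (Polynomial ℚ)) ℓ).eval
        (C (Polynomial.X : Polynomial ℚ) * X - C (C (j : ℚ)))
      = (EPoly ℓ (j : ℚ)).comp (C Polynomial.X * X) := by
  rw [asc_eval_prod, EPoly_eq_prod, Polynomial.prod_comp]
  refine prod_congr rfl fun i _ => ?_
  rw [add_comp, X_comp, C_comp]
  have h1 : ((i : ℕ) : Polynomial (Polynomial ℚ)) = C (C (i : ℚ)) := by simp
  rw [h1, map_sub, map_sub]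
  ring

noncomputable def APoly (ℓ : ℕ) : Polynomial (Polynomial ℚ) :=
  C (C ((ℓ : ℚ)⁻¹)) * ∑ j ∈ range ℓ,
    C (C ((-1 : ℚ) ^ j / ((j.factorial : ℚ) * ((ℓ - 1 - j).factorial : ℚ)))) *
      (ascPochhammer (Polynomial (Polynomial ℚ)) ℓ).eval (X - C (C (j : ℚ))) *
      (ascPochhammer (Polynomial (Polynomial ℚ)) ℓ).eval
        (C (Polynomial.X : Polynomial ℚ) * X - C (C (j : ℚ)))

theorem step1 (ℓ : ℕ) :
    (APoly ℓ).coeff (ℓ + 1)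
      = ∑ a ∈ range (ℓ + 2), Polynomial.X ^ (ℓ + 1 - a) *
          C (∑ j ∈ range ℓ, (ℓ : ℚ)⁻¹ *
            ((-1 : ℚ) ^ j / ((j.factorial : ℚ) * ((ℓ - 1 - j).factorial : ℚ))) *
            (((HPoly ℓ).coeff a).eval (j : ℚ) *
             ((HPoly ℓ).coeff (ℓ + 1 - a)).eval (j : ℚ))) := by
  rw [APoly, coeff_C_mul, finset_sum_coeff]
  have hterm : ∀ j ∈ range ℓ,
      (C (C ((-1 : ℚ) ^ j / ((j.factorial : ℚ) * ((ℓ - 1 - j).factorial : ℚ)))) *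
        (ascPochhammer (Polynomial (Polynomial ℚ)) ℓ).eval (X - C (C (j : ℚ))) *
        (ascPochhammer (Polynomial (Polynomial ℚ)) ℓ).eval
          (C (Polynomial.X : Polynomial ℚ) * X - C (C (j : ℚ)))).coeff (ℓ + 1)
      = C ((-1 : ℚ) ^ j / ((j.factorial : ℚ) * ((ℓ - 1 - j).factorial : ℚ))) *
          ∑ a ∈ range (ℓ + 2),
            C (((HPoly ℓ).coeff a).eval (j : ℚ)) *
              (Polynomial.X ^ (ℓ + 1 - a) * C (((HPoly ℓ).coeff (ℓ + 1 - a)).eval (j : ℚ))) := by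
    intro j _
    rw [mul_assoc, coeff_C_mul, eval_asc_sub, eval_asc_sub', coeff_mul,
      Finset.Nat.sum_antidiagonal_eq_sum_range_succ_mk]
    congr 1
    refine sum_congr rfl fun a _ => ?_
    rw [EPoly_coeff, comp_CX_coeff, EPoly_coeff]
  rw [sum_congr rfl hterm]
  rw [Finset.mul_sum]
  simp only [Finset.mul_sum]
  rw [sum_comm]
  refine sum_congr rfl fun a _ => ?_
  rw [map_sum (C : ℚ →+* Polynomial ℚ), Finset.mul_sum]
  refine sum_congr rfl fun j _ => ?_
  simp only [map_mul]
  ring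

theorem inner_zero (ℓ a : ℕ) (h : a = 0 ∨ a = ℓ + 1) :
    (∑ j ∈ range ℓ, (ℓ : ℚ)⁻¹ *
        ((-1 : ℚ) ^ j / ((j.factorial : ℚ) * ((ℓ - 1 - j).factorial : ℚ))) *
        (((HPoly ℓ).coeff a).eval (j : ℚ) *
         ((HPoly ℓ).coeff (ℓ + 1 - a)).eval (j : ℚ))) = 0 := by
  refine Finset.sum_eq_zero fun j _ => ?_
  rcases h with rfl | rfl
  · rw [show ℓ + 1 - 0 = ℓ + 1 from rfl, HPoly_coeff_eq_zero ℓ (ℓ + 1) (by omega)]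
    simp
  · rw [HPoly_coeff_eq_zero ℓ (ℓ + 1) (by omega)]
    simp

theorem inner_val (ℓ a : ℕ) (h1 : 1 ≤ a) (h2 : a ≤ ℓ) :
    (∑ j ∈ range ℓ, (ℓ : ℚ)⁻¹ *
        ((-1 : ℚ) ^ j / ((j.factorial : ℚ) * ((ℓ - 1 - j).factorial : ℚ))) *
        (((HPoly ℓ).coeff a).eval (j : ℚ) *
         ((HPoly ℓ).coeff (ℓ + 1 - a)).eval (j : ℚ)))
      = (ℓ.choose a : ℚ) * (ℓ.choose (ℓ + 1 - a) : ℚ) / (ℓ : ℚ) := by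
  set b := ℓ + 1 - a with hb
  have hb1 : 1 ≤ b := by omega
  have hb2 : b ≤ ℓ := by omega
  set f : Polynomial ℚ := (HPoly ℓ).coeff a * (HPoly ℓ).coeff b with hf
  have hda := HPoly_coeff_natDegree_le ℓ a h2
  have hdb := HPoly_coeff_natDegree_le ℓ b hb2
  have hfd : f.natDegree ≤ ℓ - 1 := by
    refine le_trans natDegree_mul_le ?_
    omega
  have hab : (ℓ - a) + (ℓ - b) = ℓ - 1 := by omega
  have hfc : f.coeff (ℓ - 1) = (-1 : ℚ) ^ (ℓ - 1) * (ℓ.choose a : ℚ) * (ℓ.choose b : ℚ) := by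
    rw [hf, ← hab, coeff_mul_add_eq_of_natDegree_le hda hdb,
      HPoly_coeff_top ℓ a h2, HPoly_coeff_top ℓ b hb2, pow_add]
    ring
  have hfact : ((ℓ - 1).factorial : ℚ) ≠ 0 := by
    exact_mod_cast (ℓ - 1).factorial_ne_zero
  have hsum := alt_sum_eval (ℓ - 1) f hfd
  have hrange : ℓ - 1 + 1 = ℓ := by omega
  rw [hrange] at hsum
  have hw : ∀ j ∈ range ℓ,
      (ℓ : ℚ)⁻¹ * ((-1 : ℚ) ^ j / ((j.factorial : ℚ) * ((ℓ - 1 - j).factorial : ℚ))) *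
          (((HPoly ℓ).coeff a).eval (j : ℚ) * ((HPoly ℓ).coeff b).eval (j : ℚ))
        = ((ℓ : ℚ)⁻¹ / ((ℓ - 1).factorial : ℚ)) *
            ((-1 : ℚ) ^ j * (((ℓ - 1).choose j : ℚ)) * f.eval (j : ℚ)) := by
    intro j hj
    have hjle : j ≤ ℓ - 1 := by
      have := mem_range.mp hj; omega
    have hkey : ((ℓ - 1).choose j) * j.factorial * (ℓ - 1 - j).factorial
        = (ℓ - 1).factorial := Nat.choose_mul_factorial_mul_factorial hjle
    have hc : (((ℓ - 1).choose j : ℚ)) * (j.factorial : ℚ) * ((ℓ - 1 - j).factorial : ℚ)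
        = ((ℓ - 1).factorial : ℚ) := by exact_mod_cast congrArg (Nat.cast : ℕ → ℚ) hkey
    have hww : ((-1 : ℚ) ^ j) / ((j.factorial : ℚ) * ((ℓ - 1 - j).factorial : ℚ))
        = (-1 : ℚ) ^ j * (((ℓ - 1).choose j : ℚ)) / (((ℓ - 1).factorial : ℚ)) := by
      rw [div_eq_div_iff (by positivity) (by positivity)]
      linear_combination (-(-1 : ℚ) ^ j) * hc
    rw [hf, eval_mul, hww]
    ring
  rw [sum_congr rfl hw, ← Finset.mul_sum, hsum, hfc]
  have hneg : ((-1 : ℚ) ^ (ℓ - 1)) * ((-1 : ℚ) ^ (ℓ - 1)) = 1 := by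
    rw [← pow_add, ← two_mul, pow_mul]
    norm_num
  have hre : (ℓ : ℚ)⁻¹ / (((ℓ - 1).factorial : ℚ)) *
      ((-1 : ℚ) ^ (ℓ - 1) * ((ℓ - 1).factorial : ℚ) *
        ((-1 : ℚ) ^ (ℓ - 1) * (ℓ.choose a : ℚ) * (ℓ.choose b : ℚ)))
      = ((-1 : ℚ) ^ (ℓ - 1) * (-1 : ℚ) ^ (ℓ - 1)) *
        (((ℓ - 1).factorial : ℚ) / ((ℓ - 1).factorial : ℚ)) *
        ((ℓ.choose a : ℚ) * (ℓ.choose b : ℚ) * (ℓ : ℚ)⁻¹) := by ring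
  rw [hre, hneg, div_self hfact, one_mul, one_mul, div_eq_mul_inv]

theorem APoly_leading_coeff (ℓ : ℕ) (hℓ : 1 ≤ ℓ) :
    (APoly ℓ).coeff (ℓ + 1)
      = ∑ s ∈ Finset.Icc 1 ℓ,
          C (((ℓ.choose s : ℚ) * (ℓ.choose (s - 1) : ℚ)) / (ℓ : ℚ)) * X ^ s := by
  rw [step1]
  have hsub : Finset.Icc 1 ℓ ⊆ range (ℓ + 2) := by
    intro x hx
    rw [Finset.mem_Icc] at hx
    rw [mem_range]
    omega
  rw [← Finset.sum_subset hsub (fun x hx hnx => ?_)]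
  swap
  · have hx' := mem_range.mp hx
    have : x = 0 ∨ x = ℓ + 1 := by
      rw [Finset.mem_Icc] at hnx
      omega
    rw [inner_zero ℓ x this]
    simp
  refine Finset.sum_nbij' (fun a => ℓ + 1 - a) (fun s => ℓ + 1 - s) ?_ ?_ ?_ ?_ ?_
  · intro a ha
    rw [Finset.mem_Icc] at ha ⊢
    omega
  · intro s hs
    rw [Finset.mem_Icc] at hs ⊢
    omega
  · intro a ha
    rw [Finset.mem_Icc] at ha
    omega
  · intro s hs
    rw [Finset.mem_Icc] at hs
    omega
  · intro a ha
    rw [Finset.mem_Icc] at ha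
    rw [inner_val ℓ a ha.1 ha.2]
    have h1 : ℓ + 1 - a - 1 = ℓ - a := by omega
    have h2 : ℓ.choose (ℓ - a) = ℓ.choose a := Nat.choose_symm ha.2
    rw [h1, h2]
    ring
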